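/- Fix h : ℕ, k ≥ 1, and intervals x_1, …, x_k with x_j = {m ∈ ℕ : a_j ≤ m < b_j} where a_j < b_j ≤ 2^h. Then ⋂_{j ∈ [k]} x_j ≠ ∅ if and only if there exists i ∈ [k] such that for every j ∈ [k] there exists a bitstring u_j ∈ CP_h(a_j, b_j) with a_i ∈ seg_h(u_j). -/

import Mathlib

/-- The value of a bitstring (most significant bit first):
`val [] = 0` and `val (u ++ [b]) = 2 * val u + (if b then 1 else 0)`. -/
def bitVal (u : List Bool) : ℕ :=
  u.foldl (fun n b => 2 * n + (if b then 1 else 0)) 0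

/-- The segment of a bitstring `u` (with `|u| ≤ h`) in the perfect segment tree of
height `h`: `seg_h(u) = {m : val u · 2^(h−|u|) ≤ m < (val u + 1) · 2^(h−|u|)}`. -/
def seg (h : ℕ) (u : List Bool) : Set ℕ :=
  {m | bitVal u * 2 ^ (h - u.length) ≤ m ∧ m < (bitVal u + 1) * 2 ^ (h - u.length)}

/-- The canonical partition `CP_h(a, b)` of the interval `{m : a ≤ m < b}` in the
perfect segment tree of height `h`: the bitstrings `u` with `|u| ≤ h` whose segment is
contained in `[a, b)` and such that no proper prefix of `u` has its segment contained
in `[a, b)`. -/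
def CP (h a b : ℕ) : Set (List Bool) :=
  {u | u.length ≤ h ∧ seg h u ⊆ Set.Ico a b ∧
    ∀ u' : List Bool, u' <+: u → u' ≠ u → ¬ seg h u' ⊆ Set.Ico a b}

lemma foldl_bitVal (t : List Bool) : ∀ n : ℕ,
    t.foldl (fun n b => 2 * n + (if b then 1 else 0)) n = n * 2 ^ t.length + bitVal t := by
  induction t with
  | nil => intro n; simp [bitVal]
  | cons b t ih =>
      intro n
      simp only [List.foldl_cons, List.length_cons]
      rw [ih]
      have h2 : bitVal (b :: t) = (if b then 1 else 0) * 2 ^ t.length + bitVal t := by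
        rw [bitVal, List.foldl_cons, ih]
        simp
      rw [h2]
      cases b <;> simp <;> ring

lemma bitVal_lt (t : List Bool) : bitVal t < 2 ^ t.length := by
  induction t with
  | nil => simp [bitVal]
  | cons b t ih =>
      rw [bitVal, List.foldl_cons, foldl_bitVal]
      simp only [List.length_cons, pow_succ]
      cases b <;> simp [bitVal] at * <;> omega

lemma bitVal_append (u t : List Bool) :
    bitVal (u ++ t) = bitVal u * 2 ^ t.length + bitVal t := by
  rw [bitVal, List.foldl_append, foldl_bitVal]; rfl

lemma seg_mono {h : ℕ} {u' u : List Bool} (hp : u' <+: u) (hu : u.length ≤ h) :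
    seg h u ⊆ seg h u' := by
  obtain ⟨t, rfl⟩ := hp
  intro m hm
  obtain ⟨h1, h2⟩ := hm
  rw [bitVal_append, List.length_append] at h1 h2
  have hlen : h - u'.length = (h - (u'.length + t.length)) + t.length := by
    have := (List.length_append : (u' ++ t).length = _) ▸ hu
    omega
  have hbt := bitVal_lt t
  constructor
  · rw [hlen]
    calc bitVal u' * 2 ^ ((h - (u'.length + t.length)) + t.length)
        = bitVal u' * 2 ^ t.length * 2 ^ (h - (u'.length + t.length)) := by ring
      _ ≤ (bitVal u' * 2 ^ t.length + bitVal t) * 2 ^ (h - (u'.length + t.length)) := by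
          exact Nat.mul_le_mul_right _ (Nat.le_add_right _ _)
      _ ≤ m := h1
  · rw [hlen]
    calc m < (bitVal u' * 2 ^ t.length + bitVal t + 1) * 2 ^ (h - (u'.length + t.length)) := h2
      _ ≤ (bitVal u' * 2 ^ t.length + 2 ^ t.length) * 2 ^ (h - (u'.length + t.length)) := by
          exact Nat.mul_le_mul_right _ (by omega)
      _ = (bitVal u' + 1) * 2 ^ ((h - (u'.length + t.length)) + t.length) := by ring

lemma exists_full_path (h m : ℕ) (hm : m < 2 ^ h) :
    ∃ u : List Bool, u.length = h ∧ bitVal u = m := by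
  induction h generalizing m with
  | zero => exact ⟨[], rfl, by interval_cases m; rfl⟩
  | succ h ih =>
      obtain ⟨u, hlen, hval⟩ := ih (m / 2) (by omega)
      refine ⟨u ++ [decide (m % 2 = 1)], by simp [hlen], ?_⟩
      rw [bitVal_append]
      simp only [List.length_singleton, pow_one]
      have : bitVal [decide (m % 2 = 1)] = m % 2 := by
        rcases Nat.mod_two_eq_zero_or_one m with h2 | h2 <;> simp [bitVal, h2]
      rw [this, hval]
      omega

lemma CP_covers {h a b m : ℕ} (ha : a ≤ m) (hm : m < b) (hb : b ≤ 2 ^ h) :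
    ∃ u ∈ CP h a b, m ∈ seg h u := by
  have hS : ∃ n, ∃ u : List Bool, u.length = n ∧ n ≤ h ∧ m ∈ seg h u ∧
      seg h u ⊆ Set.Ico a b := by
    obtain ⟨u, hlen, hval⟩ := exists_full_path h m (lt_of_lt_of_le hm hb)
    refine ⟨h, u, hlen, le_refl _, ?_, ?_⟩
    · constructor <;> simp [hval, hlen]
    · intro x hx
      obtain ⟨h1, h2⟩ := hx
      simp [hval, hlen] at h1 h2
      exact ⟨by omega, by omega⟩
  classical
  obtain ⟨u, hlen, hle, hmem, hsub⟩ := Nat.find_spec hS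
  refine ⟨u, ⟨hlen ▸ hle, hsub, ?_⟩, hmem⟩
  intro u' hp hne hsub'
  have hlt : u'.length < u.length := by
    rcases lt_or_eq_of_le hp.length_le with h' | h'
    · exact h'
    · exact absurd (List.IsPrefix.eq_of_length hp h') hne
  have : m ∈ seg h u' := seg_mono hp (hlen ▸ hle) hmem
  exact Nat.find_min hS (hlen ▸ hlt) ⟨u', rfl, by omega, this, hsub'⟩

/-- (Intersection Predicate Rewriting 1, dyadic form.) Fix `h`,
`k ≥ 1`, and intervals `x j = {m : a j ≤ m < b j}` with `a j < b j ≤ 2^h`. Then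
`⋂ j, x j ≠ ∅` iff there is an index `i` such that for every `j` some bitstring
`u ∈ CP_h(a j, b j)` has `a i ∈ seg_h(u)`. -/
theorem intersection_nonempty_iff_canonical_nodes
    (h k : ℕ) (hk : 1 ≤ k) (a b : Fin k → ℕ)
    (hab : ∀ j, a j < b j) (hb : ∀ j, b j ≤ 2 ^ h) :
    (⋂ j, Set.Ico (a j) (b j)).Nonempty ↔
      ∃ i : Fin k, ∀ j : Fin k, ∃ u ∈ CP h (a j) (b j), a i ∈ seg h u := by
  constructor
  · rintro ⟨m, hm⟩
    simp only [Set.mem_iInter, Set.mem_Ico] at hm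
    have : Nonempty (Fin k) := ⟨⟨0, hk⟩⟩
    obtain ⟨i, hi⟩ := Finite.exists_max a
    refine ⟨i, fun j => ?_⟩
    exact CP_covers (hi j) (lt_of_le_of_lt (hm i).1 (hm j).2) (hb j)
  · rintro ⟨i, hi⟩
    refine ⟨a i, Set.mem_iInter.2 fun j => ?_⟩
    obtain ⟨u, hu, hmem⟩ := hi j
    exact hu.2.1 hmem
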